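/- The univariate q-Gaussian density satisfies the q-variance (escort) constraint: for 1 < q < 3, μ_q ∈ ℝ, σ_q > 0, both integrals ∫_{-∞}^{∞} p_q(x)^q dx and ∫_{-∞}^{∞} (x-μ_q)²·p_q(x)^q dx converge, and ∫_{-∞}^{∞} (x-μ_q)²·p_q(x)^q dx = σ_q² · ∫_{-∞}^{∞} p_q(x)^q dx; that is, the variance of the normalized q-escort distribution p_q^q/∫p_q^q equals σ_q². -/

import Mathlib

open MeasureTheory

section QAux
open Real Filter Topology Set

lemma qaux_base_pos (c : ℝ) (hc : 0 < c) (u : ℝ) : 0 < 1 + c * u ^ 2 := by positivity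

lemma qaux_bound (c α : ℝ) (hc : 0 < c) (hα : 0 ≤ α) (u : ℝ) :
    (1 + c * u ^ 2) ^ (-α) ≤ (min 1 c / 2) ^ (-α) * (1 + ‖u‖) ^ (-(2 * α)) := by
  set m := min 1 c with hm
  have hm0 : 0 < m := lt_min one_pos hc
  have h1 : m / 2 * (1 + ‖u‖) ^ 2 ≤ 1 + c * u ^ 2 := by
    have hmc : m ≤ c := min_le_right _ _
    have hm1 : m ≤ 1 := min_le_left _ _
    have h2 := sq_abs u
    rw [Real.norm_eq_abs]
    nlinarith [abs_nonneg u, sq_nonneg (|u| - 1)]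
  have hpos : (0:ℝ) < m / 2 * (1 + ‖u‖) ^ 2 := by positivity
  have h3 : (1 + c * u ^ 2) ^ (-α) ≤ (m / 2 * (1 + ‖u‖) ^ 2) ^ (-α) :=
    Real.rpow_le_rpow_of_nonpos hpos h1 (by linarith)
  refine h3.trans_eq ?_
  rw [Real.mul_rpow (by positivity) (by positivity)]
  congr 1
  rw [← Real.rpow_natCast (1 + ‖u‖) 2, ← Real.rpow_mul (by positivity)]
  norm_num

lemma qaux_cont (c α : ℝ) (hc : 0 < c) :
    Continuous (fun u : ℝ => (1 + c * u ^ 2) ^ (-α)) := by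
  apply Continuous.rpow_const (by continuity)
  intro x; exact Or.inl (qaux_base_pos c hc x).ne'

lemma qaux_int1 (c α : ℝ) (hc : 0 < c) (hα : 3 / 2 < α) :
    Integrable (fun u : ℝ => (1 + c * u ^ 2) ^ (-α)) := by
  have hint : Integrable (fun u : ℝ => (min 1 c / 2) ^ (-α) * (1 + ‖u‖) ^ (-(2 * α))) := by
    refine (integrable_one_add_norm (E := ℝ) ?_).const_mul _
    simp; linarith
  refine hint.mono' (qaux_cont c α hc).aestronglyMeasurable ?_
  refine ae_of_all _ fun u => ?_
  rw [Real.norm_eq_abs, abs_of_nonneg (Real.rpow_nonneg (qaux_base_pos c hc u).le _)]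
  exact qaux_bound c α hc (by linarith) u

lemma qaux_int2 (c α : ℝ) (hc : 0 < c) (hα : 3 / 2 < α) :
    Integrable (fun u : ℝ => u ^ 2 * (1 + c * u ^ 2) ^ (-α)) := by
  have hint : Integrable
      (fun u : ℝ => (min 1 c / 2) ^ (-α) * (1 + ‖u‖) ^ (-(2 * α - 2))) := by
    refine (integrable_one_add_norm (E := ℝ) ?_).const_mul _
    simp; linarith
  refine hint.mono' ((continuous_pow 2).mul (qaux_cont c α hc)).aestronglyMeasurable ?_
  refine ae_of_all _ fun u => ?_
  have hb := qaux_base_pos c hc u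
  rw [Real.norm_eq_abs, abs_of_nonneg (by positivity)]
  have h1 : u ^ 2 * (1 + c * u ^ 2) ^ (-α)
      ≤ (1 + ‖u‖) ^ 2 * ((min 1 c / 2) ^ (-α) * (1 + ‖u‖) ^ (-(2 * α))) := by
    have h2 : u ^ 2 ≤ (1 + ‖u‖) ^ 2 := by
      rw [Real.norm_eq_abs]
      nlinarith [abs_nonneg u, sq_abs u]
    exact mul_le_mul h2 (qaux_bound c α hc (by linarith) u)
      (Real.rpow_nonneg hb.le _) (by positivity)
  refine h1.trans_eq ?_
  rw [mul_comm ((1 + ‖u‖) ^ 2), mul_assoc]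
  congr 1
  rw [← Real.rpow_natCast (1 + ‖u‖) 2, ← Real.rpow_add (by positivity)]
  norm_num
  ring_nf

lemma qaux_tendsto_top (c α : ℝ) (hc : 0 < c) (hα : 3 / 2 < α) :
    Tendsto (fun u : ℝ => u * (1 + c * u ^ 2) ^ (1 - α)) atTop (𝓝 0) := by
  have hB : Tendsto (fun u : ℝ => c ^ (1 - α) * u ^ (-(2 * α - 3))) atTop (𝓝 0) := by
    have := (tendsto_rpow_neg_atTop (by linarith : (0:ℝ) < 2 * α - 3)).const_mul (c ^ (1 - α))
    simpa using this
  refine squeeze_zero' ?_ ?_ hB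
  · filter_upwards [eventually_ge_atTop (0:ℝ)] with u hu
    have hb := qaux_base_pos c hc u
    positivity
  · filter_upwards [eventually_gt_atTop (0:ℝ)] with u hu
    have hb := qaux_base_pos c hc u
    have h1 : (1 + c * u ^ 2) ^ (1 - α) ≤ (c * u ^ 2) ^ (1 - α) :=
      Real.rpow_le_rpow_of_nonpos (by positivity) (by linarith) (by linarith)
    have h2 : u * (c * u ^ 2) ^ (1 - α) = c ^ (1 - α) * u ^ (-(2 * α - 3)) := by
      rw [Real.mul_rpow hc.le (by positivity)]
      have e : (u ^ 2 : ℝ) ^ (1 - α) = u ^ (2 * (1 - α)) := by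
        rw [← Real.rpow_natCast u 2, ← Real.rpow_mul hu.le]; norm_num
      rw [e, show -(2 * α - 3) = 1 + 2 * (1 - α) by ring, Real.rpow_add hu, Real.rpow_one]
      ring
    calc u * (1 + c * u ^ 2) ^ (1 - α) ≤ u * (c * u ^ 2) ^ (1 - α) := by
          exact mul_le_mul_of_nonneg_left h1 hu.le
      _ = c ^ (1 - α) * u ^ (-(2 * α - 3)) := h2

lemma qaux_parts (c α : ℝ) (hc : 0 < c) (hα : 3 / 2 < α) :
    c * (2 * α - 3) * ∫ u : ℝ, u ^ 2 * (1 + c * u ^ 2) ^ (-α)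
      = ∫ u : ℝ, (1 + c * u ^ 2) ^ (-α) := by
  set g : ℝ → ℝ := fun u => u * (1 + c * u ^ 2) ^ (1 - α) with hg
  set D : ℝ → ℝ := fun u =>
    (1 + c * u ^ 2) ^ (-α) + c * (3 - 2 * α) * (u ^ 2 * (1 + c * u ^ 2) ^ (-α)) with hD
  have hderiv : ∀ u : ℝ, HasDerivAt g (D u) u := by
    intro u
    have hb := qaux_base_pos c hc u
    have h1 : HasDerivAt (fun u : ℝ => 1 + c * u ^ 2) (c * (2 * u)) u := by
      simpa using ((hasDerivAt_pow 2 u).const_mul c).const_add 1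
    have h2 := h1.rpow_const (p := 1 - α) (Or.inl hb.ne')
    have h3 : HasDerivAt (fun y => id y * (1 + c * y ^ 2) ^ (1 - α)) _ u :=
      (hasDerivAt_id u).mul h2
    convert h3 using 1
    · rfl
    have e1 : (1 + c * u ^ 2) ^ (1 - α) = (1 + c * u ^ 2) * (1 + c * u ^ 2) ^ (-α) := by
      rw [sub_eq_add_neg, Real.rpow_add hb, Real.rpow_one]
    have e2 : (1 + c * u ^ 2) ^ (1 - α - 1) = (1 + c * u ^ 2) ^ (-α) := by
      norm_num
    simp only [hD, e1, e2, id_eq]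
    ring
  have hint : Integrable D :=
    (qaux_int1 c α hc hα).add ((qaux_int2 c α hc hα).const_mul _)
  have htop := qaux_tendsto_top c α hc hα
  have hbot : Tendsto g atBot (𝓝 0) := by
    have hneg : Tendsto (fun u : ℝ => g (-u)) atTop (𝓝 0) := by
      have e : (fun u : ℝ => g (-u)) = fun u => -(u * (1 + c * u ^ 2) ^ (1 - α)) := by
        funext u
        show (-u) * (1 + c * (-u) ^ 2) ^ (1 - α) = -(u * (1 + c * u ^ 2) ^ (1 - α))
        rw [neg_sq]; ring
      rw [e]
      simpa using htop.neg
    refine (hneg.comp tendsto_neg_atBot_atTop).congr fun u => ?_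
    simp [Function.comp]
  have h0 : ∫ u : ℝ, D u = 0 := by
    rw [integral_of_hasDerivAt_of_tendsto hderiv hint hbot htop]; simp
  rw [hD] at h0
  rw [integral_add (qaux_int1 c α hc hα) ((qaux_int2 c α hc hα).const_mul _),
    integral_const_mul] at h0
  linarith
end QAux

/-- The Euler Beta function `B(a,b) = ∫₀¹ t^(a-1) (1-t)^(b-1) dt`. -/
noncomputable def Beta (a b : ℝ) : ℝ := ∫ t in (0:ℝ)..1, t ^ (a - 1) * (1 - t) ^ (b - 1)

/-- Normalization constant of the univariate q-Gaussian:
`Z_q = (σ_q²·(3-q)/(q-1))^(1/2) · B(1/2, (3-q)/(2(q-1)))`. -/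
noncomputable def Zq (q σq : ℝ) : ℝ :=
  (σq ^ 2 * (3 - q) / (q - 1)) ^ ((1 : ℝ) / 2) * Beta (1 / 2) ((3 - q) / (2 * (q - 1)))

/-- The univariate q-Gaussian density
`p_q(x) = (1/Z_q)·(1 - ((1-q)/(3-q))·(x-μ_q)²/σ_q²)^(1/(1-q))`. -/
noncomputable def pq (q μq σq x : ℝ) : ℝ :=
  (1 / Zq q σq) * (1 - ((1 - q) / (3 - q)) * (x - μq) ^ 2 / σq ^ 2) ^ (1 / (1 - q))

/-- For `1 < q < 3`, both `∫ p_q^q` and `∫ (x-μ_q)²·p_q^q` converge, and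
`∫ (x-μ_q)²·p_q(x)^q dx = σ_q² · ∫ p_q(x)^q dx`: the variance of the normalized
q-escort distribution equals `σ_q²`. -/
theorem qGaussian_escort_variance (q μq σq : ℝ) (hq1 : 1 < q) (hq3 : q < 3) (hσ : 0 < σq) :
    Integrable (fun x : ℝ => pq q μq σq x ^ q) ∧
    Integrable (fun x : ℝ => (x - μq) ^ 2 * pq q μq σq x ^ q) ∧
    (∫ x : ℝ, (x - μq) ^ 2 * pq q μq σq x ^ q) = σq ^ 2 * ∫ x : ℝ, pq q μq σq x ^ q := by
  open Real Filter Topology Set in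
  have hq1' : (0:ℝ) < q - 1 := by linarith
  have hq3' : (0:ℝ) < 3 - q := by linarith
  have h1q : (1:ℝ) - q ≠ 0 := by intro h; linarith
  set c : ℝ := (q - 1) / ((3 - q) * σq ^ 2) with hcdef
  set α : ℝ := q / (q - 1) with hαdef
  have hc : 0 < c := by positivity
  have hα : 3 / 2 < α := by
    rw [hαdef, lt_div_iff₀ hq1']; linarith
  have hZ : 0 ≤ Zq q σq := by
    unfold Zq Beta
    have hB : 0 ≤ ∫ t in (0:ℝ)..1,
        t ^ ((1:ℝ)/2 - 1) * (1 - t) ^ ((3 - q)/(2*(q-1)) - 1) := by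
      apply intervalIntegral.integral_nonneg (by norm_num)
      intro t ht
      exact mul_nonneg (Real.rpow_nonneg ht.1 _)
        (Real.rpow_nonneg (by linarith [ht.2]) _)
    exact mul_nonneg (Real.rpow_nonneg (by positivity) _) hB
  set C : ℝ := (1 / Zq q σq) ^ q with hCdef
  have hpt : ∀ x : ℝ, pq q μq σq x ^ q = C * (1 + c * (x - μq) ^ 2) ^ (-α) := by
    intro x
    have hb : (0:ℝ) < 1 + c * (x - μq) ^ 2 := qaux_base_pos c hc _
    have hbase : 1 - ((1 - q) / (3 - q)) * (x - μq) ^ 2 / σq ^ 2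
        = 1 + c * (x - μq) ^ 2 := by
      rw [hcdef]; field_simp; ring
    rw [pq, hbase, Real.mul_rpow (one_div_nonneg.mpr hZ) (Real.rpow_nonneg hb.le _),
      ← Real.rpow_mul hb.le]
    have hexp : 1 / (1 - q) * q = -α := by
      rw [hαdef]; field_simp; ring
    rw [hexp]
  have I1 := qaux_int1 c α hc hα
  have I2 := qaux_int2 c α hc hα
  have hi1 : Integrable (fun x : ℝ => pq q μq σq x ^ q) := by
    have := (I1.comp_sub_right μq).const_mul C
    refine this.congr ?_
    exact ae_of_all _ fun x => (hpt x).symm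
  have hi2 : Integrable (fun x : ℝ => (x - μq) ^ 2 * pq q μq σq x ^ q) := by
    have := (I2.comp_sub_right μq).const_mul C
    refine this.congr ?_
    exact ae_of_all _ fun x => by simp only [hpt]; ring
  refine ⟨hi1, hi2, ?_⟩
  have e1 : (∫ x : ℝ, pq q μq σq x ^ q)
      = C * ∫ u : ℝ, (1 + c * u ^ 2) ^ (-α) := by
    rw [show (fun x : ℝ => pq q μq σq x ^ q)
        = fun x : ℝ => C * (1 + c * (x - μq) ^ 2) ^ (-α) from funext hpt,
      integral_const_mul,
      integral_sub_right_eq_self (fun u : ℝ => (1 + c * u ^ 2) ^ (-α)) μq]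
  have e2 : (∫ x : ℝ, (x - μq) ^ 2 * pq q μq σq x ^ q)
      = C * ∫ u : ℝ, u ^ 2 * (1 + c * u ^ 2) ^ (-α) := by
    rw [show (fun x : ℝ => (x - μq) ^ 2 * pq q μq σq x ^ q)
        = fun x : ℝ => C * ((x - μq) ^ 2 * (1 + c * (x - μq) ^ 2) ^ (-α)) from
        funext fun x => by rw [hpt x]; ring,
      integral_const_mul,
      integral_sub_right_eq_self (fun u : ℝ => u ^ 2 * (1 + c * u ^ 2) ^ (-α)) μq]
  rw [e1, e2, ← qaux_parts c α hc hα]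
  have hσc : σq ^ 2 * (c * (2 * α - 3)) = 1 := by
    rw [hcdef, hαdef]; field_simp; ring
  calc C * ∫ u : ℝ, u ^ 2 * (1 + c * u ^ 2) ^ (-α)
      = (σq ^ 2 * (c * (2 * α - 3))) * (C * ∫ u : ℝ, u ^ 2 * (1 + c * u ^ 2) ^ (-α)) := by
        rw [hσc, one_mul]
    _ = σq ^ 2 * (C * (c * (2 * α - 3) * ∫ u : ℝ, u ^ 2 * (1 + c * u ^ 2) ^ (-α))) := by
        ring
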